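/- Let K be a positive even integer, K_all ≥ K an integer, and let φ range over vectors (φ_0, ..., φ_{K-1}) of integers with 0 ≤ φ_k ≤ K_all - 1. Define S_{φ,1} = (1/K)Σ_k φ_k and S_{φ,2} = (1/K)Σ_k φ_k², and L(φ) = S_{φ,2} - S_{φ,1}². Then L is maximized (over vectors with distinct entries) by taking φ to consist of the K/2 smallest indices {0, 1, ..., K/2 - 1} together with the K/2 largest indices {K_all - K/2, ..., K_all - 1}. -/

import Mathlib

lemma f_expand (m : ℤ) (t : ℕ) :
    (t:ℤ) * (m - t) = ∑ s ∈ Finset.range t, (m - 2*(s:ℤ) - 1) := by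
  induction t with
  | zero => simp
  | succ n ih => rw [Finset.sum_range_succ, ← ih]; push_cast; ring

lemma key (K : ℕ) (hKeven : Even K) (m : ℤ) (hm0 : 0 ≤ m) (hm : (K:ℤ) ≤ m + 1)
    (φ : Fin K → ℤ) (hinj : Function.Injective φ)
    (hb : ∀ k, 0 ≤ φ k ∧ φ k ≤ m) :
    2 * ∑ j ∈ Finset.range (K/2), (j:ℤ) * (m - (j:ℤ)) ≤ ∑ k, φ k * (m - φ k) := by
  set n := K / 2 with hn
  have hK2 : K = 2 * n := (Nat.two_mul_div_two_of_even hKeven).symm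
  set e : Fin K → ℕ := fun k => (min (φ k) (m - φ k)).toNat with he
  have hed : ∀ k, (e k : ℤ) = min (φ k) (m - φ k) := fun k =>
    Int.toNat_of_nonneg (le_min (hb k).1 (by linarith [(hb k).2]))
  have hprod : ∀ k, φ k * (m - φ k) = (e k : ℤ) * (m - e k) := by
    intro k
    rcases le_total (φ k) (m - φ k) with h | h
    · rw [hed, min_eq_left h]
    · rw [hed, min_eq_right h]; ring
  have he2 : ∀ k, 2 * (e k : ℤ) ≤ m := by
    intro k
    have h1 : (e k : ℤ) ≤ φ k := by rw [hed]; exact min_le_left _ _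
    have h2 : (e k : ℤ) ≤ m - φ k := by rw [hed]; exact min_le_right _ _
    linarith
  set B := m.toNat + 1 with hB
  have hmB : (m:ℤ) < (B:ℤ) := by
    have := Int.toNat_of_nonneg hm0
    push_cast [hB]; omega
  have heB : ∀ k, e k < B := by
    intro k
    have := he2 k
    have h0 : (0:ℤ) ≤ (e k : ℤ) := Int.natCast_nonneg _
    have : (e k : ℤ) < B := by linarith
    exact_mod_cast this
  have hnB : n ≤ B := by
    have : (n:ℤ) ≤ m + 1 := by push_cast [hK2] at hm ⊢; omega
    have : (n:ℤ) ≤ (B:ℤ) := by linarith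
    exact_mod_cast this
  -- rewrite RHS
  have hRHS : ∑ k, φ k * (m - φ k)
      = ∑ s ∈ Finset.range B, ((Finset.univ.filter (fun k => s < e k)).card : ℤ) * (m - 2*(s:ℤ) - 1) := by
    calc ∑ k, φ k * (m - φ k) = ∑ k, ∑ s ∈ Finset.range B, (if s < e k then (m - 2*(s:ℤ) - 1) else 0) := by
          refine Finset.sum_congr rfl fun k _ => ?_
          rw [hprod k, f_expand]
          rw [← Finset.sum_filter]
          congr 1
          ext s
          simp only [Finset.mem_range, Finset.mem_filter]
          constructor
          · intro h; exact ⟨lt_of_lt_of_le h (le_of_lt (heB k)), h⟩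
          · rintro ⟨_, h⟩; exact h
      _ = ∑ s ∈ Finset.range B, ∑ k, (if s < e k then (m - 2*(s:ℤ) - 1) else 0) := Finset.sum_comm
      _ = _ := by
          refine Finset.sum_congr rfl fun s _ => ?_
          rw [← Finset.sum_filter, Finset.sum_const, nsmul_eq_mul]
  have hLHS : ∑ j ∈ Finset.range n, (j:ℤ) * (m - (j:ℤ))
      = ∑ s ∈ Finset.range B, (((Finset.range n).filter (fun j => s < j)).card : ℤ) * (m - 2*(s:ℤ) - 1) := by
    calc ∑ j ∈ Finset.range n, (j:ℤ) * (m - (j:ℤ))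
        = ∑ j ∈ Finset.range n, ∑ s ∈ Finset.range B, (if s < j then (m - 2*(s:ℤ) - 1) else 0) := by
          refine Finset.sum_congr rfl fun j hj => ?_
          rw [f_expand, ← Finset.sum_filter]
          congr 1
          ext s
          simp only [Finset.mem_range, Finset.mem_filter]
          constructor
          · intro h
            exact ⟨lt_of_lt_of_le h (le_trans (Nat.le_of_lt_succ (Nat.lt_succ_of_lt (Finset.mem_range.mp hj))) hnB), h⟩
          · rintro ⟨_, h⟩; exact h
      _ = ∑ s ∈ Finset.range B, ∑ j ∈ Finset.range n, (if s < j then (m - 2*(s:ℤ) - 1) else 0) := Finset.sum_comm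
      _ = _ := by
          refine Finset.sum_congr rfl fun s _ => ?_
          rw [← Finset.sum_filter, Finset.sum_const, nsmul_eq_mul]
  have hcardopt : ∀ s : ℕ, ((Finset.range n).filter (fun j => s < j)).card = n - (s+1) := by
    intro s
    have : (Finset.range n).filter (fun j => s < j) = Finset.Ico (s+1) n := by
      ext j; simp only [Finset.mem_filter, Finset.mem_range, Finset.mem_Ico]; omega
    rw [this, Nat.card_Ico]
  have hcount : ∀ s : ℕ, K ≤ (Finset.univ.filter (fun k => s < e k)).card + 2*(s+1) := by
    intro s
    have hsplit := Finset.card_filter_add_card_filter_not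
      (s := (Finset.univ : Finset (Fin K))) (p := fun k => s < e k)
    have hle : (Finset.univ.filter (fun k => ¬ s < e k)).card ≤ 2*(s+1) := by
      have hsub : (Finset.univ.filter (fun k => ¬ s < e k)).card
          ≤ ((Finset.Icc (0:ℤ) (s:ℤ)) ∪ Finset.Icc (m - s) m).card := by
        apply Finset.card_le_card_of_injOn φ
        · intro k hk
          simp only [Finset.mem_coe, Finset.mem_filter, not_lt] at hk
          have hds : (e k : ℤ) ≤ (s:ℤ) := by exact_mod_cast hk.2
          rw [hed k] at hds
          rcases min_le_iff.mp hds with h | h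
          · exact Finset.mem_union_left _ (Finset.mem_Icc.mpr ⟨(hb k).1, h⟩)
          · exact Finset.mem_union_right _ (Finset.mem_Icc.mpr ⟨by linarith, (hb k).2⟩)
        · intro a _ b _ hab; exact hinj hab
      refine hsub.trans ?_
      refine (Finset.card_union_le _ _).trans ?_
      have h1 : (Finset.Icc (0:ℤ) (s:ℤ)).card = s + 1 := by
        rw [Int.card_Icc]; omega
      have h2 : (Finset.Icc (m - (s:ℤ)) m).card = s + 1 := by
        rw [Int.card_Icc]; omega
      omega
    have huniv : (Finset.univ : Finset (Fin K)).card = K := Finset.card_fin K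
    omega
  rw [hRHS, hLHS, Finset.mul_sum]
  apply Finset.sum_le_sum
  intro s _
  set Ns := (Finset.univ.filter (fun k => s < e k)).card with hNs
  rw [hcardopt s]
  by_cases hsn : n ≤ s + 1
  · rw [Nat.sub_eq_zero_of_le hsn]
    simp only [Nat.cast_zero, mul_zero, zero_mul]
    rcases Nat.eq_zero_or_pos Ns with h0 | h0
    · rw [h0]; simp
    · have : ∃ k, s < e k := by
        obtain ⟨k, hk⟩ := Finset.card_pos.mp h0
        exact ⟨k, (Finset.mem_filter.mp hk).2⟩
      obtain ⟨k, hk⟩ := this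
      have h1 : (s:ℤ) + 1 ≤ (e k : ℤ) := by exact_mod_cast hk
      have := he2 k
      have hc : 0 ≤ m - 2*(s:ℤ) - 1 := by linarith
      nlinarith [mul_nonneg (Int.natCast_nonneg Ns) hc]
  · push_neg at hsn
    have hc : 0 ≤ m - 2*(s:ℤ) - 1 := by
      have : 2*(s+1) < 2*n := by omega
      have : (2:ℤ)*(s+1) + 1 ≤ 2*n := by omega
      have hKm : (2:ℤ)*n ≤ m + 1 := by push_cast [hK2] at hm; omega
      linarith
    have hNb : 2 * ((n:ℤ) - (s:ℤ) - 1) ≤ (Ns : ℤ) := by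
      have := hcount s
      have : (K:ℤ) ≤ (Ns:ℤ) + 2*((s:ℤ)+1) := by exact_mod_cast this
      have hKn : (K:ℤ) = 2*(n:ℤ) := by exact_mod_cast hK2
      linarith
    have hcast : ((n - (s+1) : ℕ) : ℤ) = (n:ℤ) - (s:ℤ) - 1 := by omega
    rw [hcast]
    calc 2 * (((n:ℤ) - s - 1) * (m - 2*(s:ℤ) - 1)) = (2*((n:ℤ) - s - 1)) * (m - 2*(s:ℤ) - 1) := by ring
      _ ≤ (Ns:ℤ) * (m - 2*(s:ℤ) - 1) := mul_le_mul_of_nonneg_right hNb hc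


/-- empirical variance of an index vector -/
noncomputable def Lvar (K : ℕ) (φ : Fin K → ℤ) : ℝ :=
  (1 / K) * ∑ k, ((φ k : ℝ)) ^ 2 - ((1 / K) * ∑ k, ((φ k : ℝ))) ^ 2

theorem stmt7 (K Kall : ℕ) (hK : 0 < K) (hKeven : Even K) (hKle : K ≤ Kall)
    (φ : Fin K → ℤ) (hinj : Function.Injective φ)
    (hbound : ∀ k, 0 ≤ φ k ∧ φ k ≤ (Kall : ℤ) - 1)
    (φopt : Fin K → ℤ)
    (hopt : ∀ k : Fin K,
      φopt k = if (k : ℕ) < K / 2 then (k : ℤ) else (Kall : ℤ) - (K : ℤ) + (k : ℤ)) :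
    Lvar K φ ≤ Lvar K φopt := by
  set n := K / 2 with hn
  have hK2 : K = 2 * n := (Nat.two_mul_div_two_of_even hKeven).symm
  set m : ℤ := (Kall : ℤ) - 1 with hm
  have hKm : (K:ℤ) ≤ m + 1 := by omega
  have hm0 : (0:ℤ) ≤ m := by omega
  -- split sums over φopt
  have hsplit : ∀ F : ℤ → ℤ, ∑ k : Fin K, F (φopt k)
      = ∑ j ∈ Finset.range n, F (j:ℤ) + ∑ j ∈ Finset.range n, F (m + 1 - n + j) := by
    intro F
    calc ∑ k : Fin K, F (φopt k)
        = ∑ i ∈ Finset.range K, F (if i < n then (i:ℤ) else (Kall:ℤ) - K + i) := by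
          rw [← Fin.sum_univ_eq_sum_range]
          exact Finset.sum_congr rfl fun k _ => by rw [hopt k]
      _ = _ := by
          rw [show K = n + n by omega, Finset.sum_range_add]
          congr 1
          · exact Finset.sum_congr rfl fun j hj => by rw [if_pos (Finset.mem_range.mp hj)]
          · refine Finset.sum_congr rfl fun j hj => ?_
            rw [if_neg (by omega)]
            congr 1
            push_cast
            omega
  -- Gauss sum
  have hgauss : 2 * (∑ j ∈ Finset.range n, (j:ℤ)) = (n:ℤ) * ((n:ℤ) - 1) := by
    have := Finset.sum_range_id_mul_two n
    have h2 : ((∑ i ∈ Finset.range n, i) * 2 : ℤ) = ((n * (n-1) : ℕ) : ℤ) := by exact_mod_cast this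
    push_cast at h2
    rcases Nat.eq_zero_or_pos n with h0 | h0
    · simp [h0]
    · have hcast : ((n - 1 : ℕ) : ℤ) = (n:ℤ) - 1 := by omega
      rw [hcast] at h2
      linarith
  have hT : 2 * (∑ k : Fin K, φopt k) = (K:ℤ) * m := by
    have hs := hsplit id
    simp only [id] at hs
    have h2 : ∑ j ∈ Finset.range n, (m + 1 - n + (j:ℤ))
        = n * (m + 1 - n) + ∑ j ∈ Finset.range n, (j:ℤ) := by
      rw [Finset.sum_add_distrib, Finset.sum_const, nsmul_eq_mul, Finset.card_range]
    have hKc : (K:ℤ) = 2 * n := by exact_mod_cast hK2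
    rw [hs, h2, hKc]
    linear_combination 2 * hgauss
  have hG : ∑ k : Fin K, φopt k * (m - φopt k)
      = 2 * ∑ j ∈ Finset.range n, (j:ℤ) * (m - (j:ℤ)) := by
    have hs := hsplit (fun x => x * (m - x))
    rw [hs]
    have h2 : ∑ j ∈ Finset.range n, (m + 1 - n + (j:ℤ)) * (m - (m + 1 - n + (j:ℤ)))
        = ∑ j ∈ Finset.range n, (j:ℤ) * (m - (j:ℤ)) := by
      have hrefl := Finset.sum_range_reflect (fun i => (i:ℤ) * (m - (i:ℤ))) n
      rw [← hrefl]
      refine Finset.sum_congr rfl fun j hj => ?_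
      have hj' : j < n := Finset.mem_range.mp hj
      have hcast : ((n - 1 - j : ℕ) : ℤ) = (n:ℤ) - 1 - j := by omega
      rw [hcast]
      ring
    rw [h2]
    ring
  -- key inequality in ℤ
  have hkey := key K hKeven m hm0 hKm φ hinj (by intro k; exact hbound k)
  -- move to ℝ
  have hkR : (0:ℝ) < (K:ℝ) := by exact_mod_cast hK
  have hsq : ∀ ψ : Fin K → ℤ, (∑ k, ((ψ k : ℝ))^2)
      = (m:ℝ) * (∑ k, (ψ k : ℝ)) - ∑ k, (ψ k : ℝ) * ((m:ℝ) - (ψ k : ℝ)) := by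
    intro ψ
    rw [Finset.mul_sum, ← Finset.sum_sub_distrib]
    exact Finset.sum_congr rfl fun k _ => by ring
  have hform : ∀ ψ : Fin K → ℤ, Lvar K ψ =
      (((m:ℝ) * (∑ k, (ψ k : ℝ)) - ∑ k, (ψ k : ℝ) * ((m:ℝ) - (ψ k : ℝ))) * (K:ℝ)
        - (∑ k, (ψ k : ℝ))^2) / (K:ℝ)^2 := by
    intro ψ
    rw [Lvar, hsq ψ]
    field_simp
  have hToR : 2 * (∑ k, ((φopt k):ℝ)) = (K:ℝ) * (m:ℝ) := by
    have h := congrArg (fun z : ℤ => (z:ℝ)) hT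
    push_cast at h
    convert h using 2
  have hGoG : (∑ k, ((φopt k):ℝ) * ((m:ℝ) - (φopt k:ℝ))) ≤ ∑ k, ((φ k):ℝ) * ((m:ℝ) - (φ k:ℝ)) := by
    have h1 := congrArg (fun z : ℤ => (z:ℝ)) hG
    have h2 : ((2 * ∑ j ∈ Finset.range n, (j:ℤ) * (m - (j:ℤ)) : ℤ) : ℝ)
        ≤ ((∑ k, φ k * (m - φ k) : ℤ) : ℝ) := by exact_mod_cast hkey
    push_cast at h1 h2
    linarith
  rw [hform φ, hform φopt]
  set T : ℝ := ∑ k, (φ k : ℝ) with hTdef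
  set G : ℝ := ∑ k, (φ k : ℝ) * ((m:ℝ) - (φ k : ℝ)) with hGdef
  set To : ℝ := ∑ k, (φopt k : ℝ) with hTodef
  set Go : ℝ := ∑ k, (φopt k : ℝ) * ((m:ℝ) - (φopt k : ℝ)) with hGodef
  apply div_le_div_of_nonneg_right ?_ (by positivity)
  nlinarith [sq_nonneg (T - (K:ℝ) * (m:ℝ) / 2), mul_nonneg hkR.le (sub_nonneg.mpr hGoG)]
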